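/- Let $d_0 > 0$, $R \le R_0$, and $\theta = \sqrt{d_0/(6R_0)}$, and suppose $\Omega \subseteq \overline{B_R(Re_n)} \subset \mathbb{R}^n$ with $0 \in \partial\Omega$, $x_0 = d_0 e_n \in \Omega$. Define $E_\theta = \{x \in \Omega : \langle x - x_0, e_n \rangle \le \theta |x - x_0|\}$ (i.e. with $v_0 = -e_n$). Then every $x \in E_\theta$ satisfies $d(x, \partial\Omega) \le x_n \le 2 d_0$ and $|x|^2 \le 4 d_0^2 + 4 R d_0$; in particular $E_\theta \subset \overline{B_{\sqrt{(1+4R_0)d_0}}(0)}$ provided $d_0 \le 1/4$. -/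

import Mathlib

lemma aux_frontier {X : Type*} [TopologicalSpace X] {s t : Set X} (hs : IsPreconnected s)
    {a b : X} (ha : a ∈ s) (hat : a ∈ t) (hb : b ∈ s) (hbt : b ∉ t) :
    (s ∩ frontier t).Nonempty := by
  by_contra h
  rw [Set.not_nonempty_iff_eq_empty] at h
  have hdisj : ∀ x ∈ s, x ∉ frontier t := fun x hx hxf =>
    (Set.eq_empty_iff_forall_notMem.1 h x) ⟨hx, hxf⟩
  have key : ∀ x ∈ s, x ∈ interior t ∪ (closure t)ᶜ := by
    intro x hx
    have hfr := hdisj x hx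
    rw [frontier_eq_closure_inter_closure] at hfr
    rcases not_and_or.mp hfr with h1 | h1
    · exact Or.inr h1
    · rw [closure_compl] at h1
      exact Or.inl (by simpa using h1)
  have hai : a ∈ interior t := by
    rcases key a ha with h1 | h1
    · exact h1
    · exact absurd (subset_closure hat) h1
  have hbi : b ∈ (closure t)ᶜ := by
    rcases key b hb with h1 | h1
    · exact absurd (interior_subset h1) hbt
    · exact h1
  have hsub : s ⊆ interior t ∪ (closure t)ᶜ := key
  rcases hs (interior t) (closure t)ᶜ isOpen_interior (isClosed_closure.isOpen_compl)
      hsub ⟨a, ha, hai⟩ ⟨b, hb, hbi⟩ with ⟨x, _, hxi, hxc⟩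
  exact hxc (subset_closure (interior_subset hxi))

set_option maxHeartbeats 1000000 in
open RealInnerProductSpace in
theorem stmt_16 (n : ℕ) (d₀ R R₀ : ℝ) (hd₀ : 0 < d₀) (hR : 0 < R) (hRR₀ : R ≤ R₀)
    (hd₀small : d₀ ≤ 1 / 4)
    (θ : ℝ) (hθ : θ = Real.sqrt (d₀ / (6 * R₀)))
    (Ω : Set (EuclideanSpace ℝ (Fin (n + 1))))
    (hΩ : Ω ⊆ Metric.closedBall (R • EuclideanSpace.single (Fin.last n) (1 : ℝ)) R)
    (htouch : (0 : EuclideanSpace ℝ (Fin (n + 1))) ∈ frontier Ω)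
    (x₀ : EuclideanSpace ℝ (Fin (n + 1)))
    (hx₀ : x₀ = d₀ • EuclideanSpace.single (Fin.last n) (1 : ℝ)) (hx₀Ω : x₀ ∈ Ω) :
    ∀ x ∈ {x ∈ Ω | ⟪x - x₀, EuclideanSpace.single (Fin.last n) (1 : ℝ)⟫ ≤ θ * ‖x - x₀‖},
      Metric.infDist x (frontier Ω) ≤ x (Fin.last n) ∧
      x (Fin.last n) ≤ 2 * d₀ ∧
      ‖x‖ ^ 2 ≤ 4 * d₀ ^ 2 + 4 * R * d₀ ∧
      x ∈ Metric.closedBall (0 : EuclideanSpace ℝ (Fin (n + 1)))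
        (Real.sqrt ((1 + 4 * R₀) * d₀)) := by
  set e : EuclideanSpace ℝ (Fin (n + 1)) := EuclideanSpace.single (Fin.last n) (1 : ℝ) with he
  have hR₀ : 0 < R₀ := lt_of_lt_of_le hR hRR₀
  -- ball inequality
  have hball : ∀ z ∈ Ω, ‖z‖ ^ 2 ≤ 2 * R * z (Fin.last n) := by
    intro z hz
    have h1 : dist z (R • e) ≤ R := hΩ hz
    have h2 : ‖z - R • e‖ ^ 2 ≤ R ^ 2 := by
      rw [← dist_eq_norm]
      nlinarith [dist_nonneg (x := z) (y := R • e)]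
    have hinner : ⟪z, R • e⟫ = R * z (Fin.last n) := by
      simp [he, real_inner_smul_right, mul_comm, EuclideanSpace.inner_single_right]
    have hnorm : ‖R • e‖ ^ 2 = R ^ 2 := by
      rw [norm_smul, he, EuclideanSpace.norm_single]
      simp [abs_of_pos hR]
    have := norm_sub_sq_real z (R • e)
    rw [hinner, hnorm] at this
    nlinarith
  have hd₀2R : d₀ ≤ 2 * R := by
    have := hball x₀ hx₀Ω
    rw [hx₀] at this
    have hx₀n : (d₀ • e) (Fin.last n) = d₀ := by
      simp [he, EuclideanSpace.single_apply]
    have hx₀norm : ‖d₀ • e‖ = d₀ := by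
      rw [norm_smul, he, EuclideanSpace.norm_single]
      simp [abs_of_pos hd₀]
    rw [hx₀n, hx₀norm] at this
    nlinarith
  intro x hx
  obtain ⟨hxΩ, hcone⟩ := hx
  set t : ℝ := x (Fin.last n) with htdef
  have hxball : ‖x‖ ^ 2 ≤ 2 * R * t := hball x hxΩ
  have hxn : t ^ 2 ≤ ‖x‖ ^ 2 := by
    have h1 : ‖x‖ ^ 2 = ∑ i, x i ^ 2 := by
      rw [EuclideanSpace.norm_eq]
      rw [Real.sq_sqrt (by positivity)]
      congr 1
      ext i
      rw [Real.norm_eq_abs, sq_abs]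
    rw [h1]
    exact Finset.single_le_sum (f := fun i => x i ^ 2) (fun i _ => sq_nonneg _)
      (Finset.mem_univ (Fin.last n))
  have ht0 : 0 ≤ t := by nlinarith
  -- cone condition rewritten
  have hθ0 : 0 ≤ θ := by rw [hθ]; exact Real.sqrt_nonneg _
  have hθsq : θ ^ 2 = d₀ / (6 * R₀) := by
    rw [hθ, Real.sq_sqrt (by positivity)]
  have hconein : t - d₀ ≤ θ * ‖x - x₀‖ := by
    have : ⟪x - x₀, e⟫ = t - d₀ := by
      rw [inner_sub_left]
      simp [he, hx₀, real_inner_smul_left, EuclideanSpace.single_apply, EuclideanSpace.inner_single_right, htdef]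
    rw [← this]
    exact hcone
  have hxx₀ : ‖x - x₀‖ ^ 2 ≤ 2 * R * t + d₀ ^ 2 := by
    have hinner : ⟪x, x₀⟫ = d₀ * t := by
      simp [hx₀, he, real_inner_smul_right, mul_comm, EuclideanSpace.inner_single_right, htdef]
    have hnorm : ‖x₀‖ ^ 2 = d₀ ^ 2 := by
      rw [hx₀, norm_smul, he, EuclideanSpace.norm_single]
      simp [abs_of_pos hd₀]
    have := norm_sub_sq_real x x₀
    rw [hinner, hnorm] at this
    nlinarith
  have ht2d₀ : t ≤ 2 * d₀ := by
    by_cases hcase : t ≤ d₀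
    · linarith
    · push_neg at hcase
      have hsq : (t - d₀) ^ 2 ≤ θ ^ 2 * ‖x - x₀‖ ^ 2 := by
        have h1 : 0 ≤ t - d₀ := by linarith
        nlinarith [norm_nonneg (x - x₀), hconein]
      rw [hθsq] at hsq
      have h6 : 6 * R₀ * (t - d₀) ^ 2 ≤ d₀ * ‖x - x₀‖ ^ 2 := by
        rw [div_mul_eq_mul_div, le_div_iff₀ (by positivity)] at hsq
        linarith
      have hA : 6 * R * (t - d₀) ^ 2 ≤ 6 * R₀ * (t - d₀) ^ 2 := by
        nlinarith [sq_nonneg (t - d₀)]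
      have hB : d₀ * ‖x - x₀‖ ^ 2 ≤ d₀ * (2 * R * t + d₀ ^ 2) :=
        mul_le_mul_of_nonneg_left hxx₀ hd₀.le
      have h7 : 6 * R * (t - d₀) ^ 2 ≤ d₀ * (2 * R * t + d₀ ^ 2) := by linarith
      by_contra hcon
      push_neg at hcon
      have hd3 : d₀ ^ 3 ≤ 2 * R * d₀ ^ 2 := by nlinarith
      have hprod : 0 < R * ((3 * t - d₀) * (t - 2 * d₀)) :=
        mul_pos hR (mul_pos (by linarith) (by linarith))
      nlinarith [hprod, hd3, h7]
  have hnormsq : ‖x‖ ^ 2 ≤ 4 * d₀ ^ 2 + 4 * R * d₀ := by nlinarith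
  refine ⟨?_, ht2d₀, hnormsq, ?_⟩
  · -- infDist part
    set y : EuclideanSpace ℝ (Fin (n + 1)) := x - t • e with hy
    have hdistxy : dist x y = t := by
      rw [dist_eq_norm, hy]
      simp only [sub_sub_cancel]
      rw [norm_smul, he, EuclideanSpace.norm_single]
      simp [abs_of_nonneg ht0]
    have hyn : y (Fin.last n) = 0 := by
      rw [hy]
      simp [he, EuclideanSpace.single_apply, htdef]
    by_cases hyΩ : y ∈ Ω
    · have hy0 : y = 0 := by
        have := hball y hyΩ
        rw [hyn] at this
        simp at this
        have : ‖y‖ = 0 := by simp [this]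
        exact norm_eq_zero.mp this
      have := Metric.infDist_le_dist_of_mem (x := x) htouch
      rw [← hy0, hdistxy] at this
      exact this
    · have hseg : IsPreconnected (segment ℝ x y) := (convex_segment x y).isPreconnected
      obtain ⟨z, hzseg, hzf⟩ := aux_frontier hseg (left_mem_segment ℝ x y) hxΩ
        (right_mem_segment ℝ x y) hyΩ
      calc Metric.infDist x (frontier Ω) ≤ dist x z := Metric.infDist_le_dist_of_mem hzf
        _ ≤ dist x y := by
            obtain ⟨a, b, ha, hb, hab, hz⟩ := hzseg
            rw [← hz, dist_eq_norm, dist_eq_norm]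
            have hz' : x - (a • x + b • y) = b • (x - y) := by
              have ha' : a = 1 - b := by linarith
              rw [ha']; module
            rw [hz', norm_smul, Real.norm_eq_abs, abs_of_nonneg hb]
            nlinarith [norm_nonneg (x - y)]
        _ = t := hdistxy
  · rw [Metric.mem_closedBall, dist_zero_right]
    have h1 : ‖x‖ ^ 2 ≤ (1 + 4 * R₀) * d₀ := by nlinarith
    exact Real.le_sqrt_of_sq_le h1
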